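/- Suppose r_n → ∞ as n → ∞ (with 0 < 2r_n < n). Then there exists a constant K > 0 such that, for every n ≥ 3 and every j with 1 ≤ j ≤ ⌊n/2⌋, one has |(2r_n)²/(n² β^n_j) − 6/(π² j²)| ≤ K/(r_n j²) + K r_n²/n². -/

import Mathlib

open MeasureTheory ProbabilityTheory Real Filter Topology

noncomputable section

/-- The eigenvalues `α^n_j` of the interaction Hamiltonian. -/
def alpha (n r j : ℕ) : ℝ :=
  (1 / (r : ℝ)) * ∑ m ∈ Finset.Icc 1 r, Real.cos (2 * j * m * π / n)

/-- `β^n_j = 1 - α^n_j`. -/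
def beta (n r j : ℕ) : ℝ := 1 - alpha n r j

/- ### Auxiliary lemmas -/

lemma aux_sum_sq (r : ℕ) : ∑ m ∈ Finset.Icc 1 r, (m:ℝ)^2 = r*(r+1)*(2*r+1)/6 := by
  induction r with
  | zero => simp
  | succ n ih =>
    rw [Finset.sum_Icc_succ_top (by omega), ih]
    push_cast; ring

lemma aux_sum_cos (x : ℝ) (r : ℕ) :
    (∑ m ∈ Finset.Icc 1 r, Real.cos (2*m*x)) * (2 * Real.sin x)
      = Real.sin ((2*r+1)*x) - Real.sin x := by
  induction r with
  | zero => simp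
  | succ n ih =>
    rw [Finset.sum_Icc_succ_top (by omega), add_mul, ih]
    have h := Real.sin_sub_sin ((2*(n+1)+1)*x) ((2*n+1)*x)
    have h1 : ((2*(n+1)+1)*x - (2*n+1)*x)/2 = x := by ring
    have h2 : ((2*(n+1)+1)*x + (2*n+1)*x)/2 = 2*(n+1)*x := by ring
    rw [h1, h2] at h
    push_cast
    nlinarith [h]

lemma aux_sin_sq_lb (t : ℝ) (h0 : 0 ≤ t) (h1 : t ≤ 1) : t^2 - t^4/2 ≤ Real.sin t ^2 := by
  rcases eq_or_lt_of_le h0 with h | h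
  · simp [← h]
  · have hs : t - t^3/4 ≤ Real.sin t := by
      have := (Real.sin_gt_sub_cube h).le; nlinarith [pow_nonneg h0 3]
    have ht2 : t^2 ≤ 1 := by nlinarith
    have hpos : 0 ≤ t - t^3/4 := by nlinarith
    have h2 : (t - t^3/4)^2 ≤ Real.sin t ^2 := pow_le_pow_left₀ hpos hs 2
    nlinarith [sq_nonneg (t^3), h2]

lemma aux_jordan (x : ℝ) (h0 : 0 ≤ x) (h1 : x ≤ π/2) : x/2 ≤ Real.sin x := by
  have hj := Real.mul_le_sin h0 h1
  have hπ : π ≤ 4 := by linarith [Real.pi_le_four]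
  have hπ0 : 0 < π := Real.pi_pos
  have h4 : x / 2 ≤ 2 / π * x := by
    rw [div_mul_eq_mul_div, le_div_iff₀ hπ0]
    nlinarith
  linarith

lemma sum_sin_sq_le (r : ℕ) (x : ℝ) :
    ∑ m ∈ Finset.Icc 1 r, Real.sin (m*x)^2 ≤ (r:ℝ)*(r+1)*(2*r+1)/6 * x^2 := by
  calc ∑ m ∈ Finset.Icc 1 r, Real.sin (m*x)^2 ≤ ∑ m ∈ Finset.Icc 1 r, ((m:ℝ)*x)^2 :=
        Finset.sum_le_sum (fun m _ => Real.sin_sq_le_sq)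
    _ = (∑ m ∈ Finset.Icc 1 r, (m:ℝ)^2) * x^2 := by
        rw [Finset.sum_mul]; exact Finset.sum_congr rfl (fun m _ => by ring)
    _ = (r:ℝ)*(r+1)*(2*r+1)/6 * x^2 := by rw [aux_sum_sq]

lemma sum_sin_sq_ge (r : ℕ) (x : ℝ) (hx : 0 ≤ x) (h1 : (r:ℝ)*x ≤ 1) :
    (r:ℝ)*(r+1)*(2*r+1)/6 * x^2 - x^4*(r:ℝ)^5/2 ≤ ∑ m ∈ Finset.Icc 1 r, Real.sin (m*x)^2 := by
  have key : ∀ m ∈ Finset.Icc 1 r, ((m:ℝ)*x)^2 - ((m:ℝ)*x)^4/2 ≤ Real.sin (m*x)^2 := by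
    intro m hm
    have hm' := Finset.mem_Icc.1 hm
    have hmr : (m:ℝ) ≤ r := Nat.cast_le.2 hm'.2
    have hmx0 : 0 ≤ (m:ℝ)*x := by positivity
    have hmx1 : (m:ℝ)*x ≤ 1 := le_trans (by nlinarith) h1
    exact aux_sin_sq_lb _ hmx0 hmx1
  have h2 : ∑ m ∈ Finset.Icc 1 r, (((m:ℝ)*x)^2 - ((m:ℝ)*x)^4/2)
      ≤ ∑ m ∈ Finset.Icc 1 r, Real.sin (m*x)^2 := Finset.sum_le_sum key
  refine le_trans ?_ h2
  rw [Finset.sum_sub_distrib]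
  have e1 : ∑ m ∈ Finset.Icc 1 r, ((m:ℝ)*x)^2 = (r:ℝ)*(r+1)*(2*r+1)/6 * x^2 := by
    rw [← aux_sum_sq, Finset.sum_mul]; exact Finset.sum_congr rfl (fun m _ => by ring)
  rw [e1]
  have e2 : ∑ m ∈ Finset.Icc 1 r, ((m:ℝ)*x)^4/2 ≤ x^4*(r:ℝ)^5/2 := by
    have hterm : ∀ m ∈ Finset.Icc 1 r, ((m:ℝ)*x)^4/2 ≤ (r:ℝ)^4*x^4/2 := by
      intro m hm
      have hm' := Finset.mem_Icc.1 hm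
      have hmr : (m:ℝ) ≤ r := Nat.cast_le.2 hm'.2
      have hm0 : (0:ℝ) ≤ m := Nat.cast_nonneg m
      have : ((m:ℝ)*x)^4 ≤ ((r:ℝ)*x)^4 := by
        apply pow_le_pow_left₀ (by positivity)
        nlinarith
      nlinarith
    calc ∑ m ∈ Finset.Icc 1 r, ((m:ℝ)*x)^4/2 ≤ ∑ m ∈ Finset.Icc 1 r, (r:ℝ)^4*x^4/2 :=
          Finset.sum_le_sum hterm
      _ = (r:ℝ)*((r:ℝ)^4*x^4/2) := by rw [Finset.sum_const, Nat.card_Icc]; simp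
      _ ≤ x^4*(r:ℝ)^5/2 := by ring_nf; rfl
  linarith

set_option maxHeartbeats 2000000 in
lemma caseA_arith (R S x : ℝ) (hR1 : 1 ≤ R) (hx0 : 0 < x) (hA : R*x ≤ 1/2)
    (hSu : S ≤ R*(R+1)*(2*R+1)/6 * x^2)
    (hSl : R*(R+1)*(2*R+1)/6 * x^2 - x^4*R^5/2 ≤ S) :
    |2*R^3/S - 6/x^2| ≤ 20/(R*x^2) + 15*R^2 := by
  have hR0 : (0:ℝ) < R := by linarith
  have hxR2 : x^2*R^2 ≤ 1/4 := by
    nlinarith [mul_le_mul hA hA (by positivity) (by norm_num)]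
  have h8 : x^4*R^5/2 ≤ x^2*R^3/8 := by
    nlinarith [mul_le_mul_of_nonneg_left hxR2 (by positivity : (0:ℝ) ≤ x^2*R^3/2)]
  have hQ : R^3/3*x^2 ≤ R*(R+1)*(2*R+1)/6*x^2 := by
    nlinarith [mul_nonneg (by nlinarith : (0:ℝ) ≤ R*(R+1)*(2*R+1)/6 - R^3/3) (sq_nonneg x)]
  have hS5 : (5/24)*x^2*R^3 ≤ S := by nlinarith
  have hSpos : 0 < S := by nlinarith [mul_pos (mul_pos hx0 hx0) (mul_pos (mul_pos hR0 hR0) hR0)]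
  have hden : 0 < S * x^2 := by positivity
  have key : 2*R^3/S - 6/x^2 = (2*R^3*x^2 - 6*S)/(S*x^2) := by
    field_simp
  have habs : |2*R^3*x^2 - 6*S| ≤ 4*x^2*R^2 + 3*x^4*R^5 := by
    rw [abs_le]
    constructor <;> nlinarith [sq_nonneg x, mul_pos hx0 hx0]
  rw [key, abs_div, abs_of_pos hden, div_le_iff₀ hden]
  refine habs.trans ?_
  have e1 : (20/(R*x^2) + 15*R^2) * (S*x^2) = 20*(S/R) + 15*R^2*S*x^2 := by
    field_simp
  rw [e1]
  have h5 : (5/24)*x^2*R^2 ≤ S/R := by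
    rw [le_div_iff₀ hR0]; nlinarith
  have h6 : 15*R^2*x^2*((5/24)*x^2*R^3) ≤ 15*R^2*x^2*S :=
    mul_le_mul_of_nonneg_left hS5 (by positivity)
  nlinarith [h5, h6]

lemma sum_eq_half_sub (r : ℕ) (x : ℝ) :
    ∑ m ∈ Finset.Icc 1 r, Real.sin (m*x)^2
      = (r:ℝ)/2 - (∑ m ∈ Finset.Icc 1 r, Real.cos (2*m*x))/2 := by
  have h : ∀ m ∈ Finset.Icc 1 r, Real.sin (m*x)^2 = 1/2 - Real.cos (2*m*x)/2 := by
    intro m _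
    rw [Real.sin_sq_eq_half_sub, ← mul_assoc]
  rw [Finset.sum_congr rfl h, Finset.sum_sub_distrib, Finset.sum_const, Nat.card_Icc,
    ← Finset.sum_div]
  simp [nsmul_eq_mul]
  ring

lemma caseB2_arith (R M S x : ℝ) (hR : 14 ≤ R) (hx0 : 0 < x) (hM8 : M*8 ≤ R)
    (hMd : (R-7)/8 ≤ M) (hxRl : 1/2 ≤ R*x) (hxR4 : x*R < 4)
    (hSl : M*(M+1)*(2*M+1)/6 * x^2 - x^4*M^5/2 ≤ S) :
    R/80000 ≤ S := by
  have hM0 : 0 < M := by linarith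
  have hMx : M*x < 1/2 := by nlinarith
  have hMx0 : 0 < M*x := by positivity
  have hMx2 : x^2*M^2 ≤ 1/4 := by nlinarith [mul_le_mul hMx.le hMx.le (by positivity) (by norm_num)]
  have h8 : x^4*M^5/2 ≤ x^2*M^3/8 := by
    nlinarith [mul_le_mul_of_nonneg_left hMx2 (by positivity : (0:ℝ) ≤ x^2*M^3/2)]
  have hQ : M^3/3*x^2 ≤ M*(M+1)*(2*M+1)/6*x^2 := by
    nlinarith [mul_nonneg (by nlinarith : (0:ℝ) ≤ M*(M+1)*(2*M+1)/6 - M^3/3) (sq_nonneg x)]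
  have hS5 : (5/24)*x^2*M^3 ≤ S := by nlinarith
  have hM16 : R/16 ≤ M := by linarith
  have hM3 : R^3/4096 ≤ M^3 := by nlinarith [sq_nonneg (M - R/16), sq_nonneg M, sq_nonneg R]
  have hx2R : 1/4 ≤ x^2*R^2 := by nlinarith [mul_le_mul hxRl hxRl (by norm_num) (by positivity)]
  have hR0 : (0:ℝ) < R := by linarith
  have step1 : (5/24)*x^2*(R^3/4096) ≤ (5/24)*x^2*M^3 :=
    mul_le_mul_of_nonneg_left hM3 (by positivity)
  have step2 : R/80000 ≤ (5/24)*x^2*(R^3/4096) := by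
    rw [div_le_iff₀ (by norm_num : (0:ℝ) < 80000)] at *
    nlinarith [mul_le_mul_of_nonneg_left hx2R (by positivity : (0:ℝ) ≤ R)]
  linarith

lemma S_single (r : ℕ) (hr : 1 ≤ r) (x : ℝ) :
    Real.sin x ^2 ≤ ∑ m ∈ Finset.Icc 1 r, Real.sin (m*x)^2 := by
  have h1 : (1:ℕ) ∈ Finset.Icc 1 r := Finset.mem_Icc.2 ⟨le_refl 1, hr⟩
  have := Finset.single_le_sum (f := fun m : ℕ => Real.sin (m*x)^2)
    (fun i _ => sq_nonneg _) h1
  simpa using this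

lemma caseB (r : ℕ) (hr : 1 ≤ r) (x : ℝ) (hx0 : 0 < x) (hx2 : x ≤ π/2)
    (hB : 1/2 ≤ (r:ℝ)*x) :
    (r:ℝ)/80000 ≤ ∑ m ∈ Finset.Icc 1 r, Real.sin (m*x)^2 := by
  have hR1 : (1:ℝ) ≤ (r:ℝ) := Nat.one_le_cast.2 hr
  have hR0 : (0:ℝ) < (r:ℝ) := by linarith
  have hsin0 : 0 < Real.sin x :=
    Real.sin_pos_of_pos_of_lt_pi hx0 (lt_of_le_of_lt hx2 (by linarith [Real.pi_pos]))
  by_cases hs : 2/(r:ℝ) ≤ Real.sin x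
  · set T := ∑ m ∈ Finset.Icc 1 r, Real.cos (2*m*x) with hT
    have hid := aux_sum_cos x r
    have h2 : T * (2*Real.sin x) ≤ 2 := by
      rw [← hT] at hid
      rw [hid]
      linarith [Real.sin_le_one ((2*(r:ℝ)+1)*x), Real.neg_one_le_sin x]
    have hRs : 2 ≤ Real.sin x * (r:ℝ) := by
      rw [div_le_iff₀ hR0] at hs; linarith
    have hTle : T ≤ (r:ℝ)/2 := by
      by_contra h
      push_neg at h
      nlinarith [mul_pos (sub_pos.2 h) hsin0]
    have hST := sum_eq_half_sub r x
    rw [← hT] at hST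
    rw [hST]
    linarith
  · push_neg at hs
    have hj := aux_jordan x hx0.le hx2
    have hxR4 : x*(r:ℝ) < 4 := by
      have h1 : x/2 < 2/(r:ℝ) := lt_of_le_of_lt hj hs
      rw [div_lt_div_iff₀ (by norm_num) hR0] at h1
      linarith
    by_cases h14 : 14 ≤ r
    · set M := r/8 with hM
      have hMr : M ≤ r := by omega
      have hr8M : r ≤ 8*M + 7 := by omega
      have hM8 : (M:ℝ)*8 ≤ (r:ℝ) := by exact_mod_cast (by omega : M*8 ≤ r)
      have hMd : ((r:ℝ)-7)/8 ≤ (M:ℝ) := by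
        have : (r:ℝ) ≤ 8*(M:ℝ) + 7 := by exact_mod_cast hr8M
        linarith
      have hR14 : (14:ℝ) ≤ (r:ℝ) := by exact_mod_cast h14
      have hMx1 : (M:ℝ)*x ≤ 1 := by nlinarith
      have hsub : ∑ m ∈ Finset.Icc 1 M, Real.sin (m*x)^2
          ≤ ∑ m ∈ Finset.Icc 1 r, Real.sin (m*x)^2 :=
        Finset.sum_le_sum_of_subset_of_nonneg
          (Finset.Icc_subset_Icc le_rfl hMr) (fun i _ _ => sq_nonneg _)
      have hSl := sum_sin_sq_ge M x hx0.le hMx1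
      exact caseB2_arith (r:ℝ) (M:ℝ) _ x hR14 hx0 hM8 hMd hB hxR4 (hSl.trans hsub)
    · push_neg at h14
      have hR13 : (r:ℝ) ≤ 13 := by exact_mod_cast Nat.le_of_lt_succ h14
      have hx26 : 1/26 ≤ x := by nlinarith
      have h1 : (1/52)^2 ≤ Real.sin x ^2 := by nlinarith
      refine le_trans ?_ (S_single r hr x)
      nlinarith

lemma core (r : ℕ) (hr : 1 ≤ r) (x : ℝ) (hx0 : 0 < x) (hx2 : x ≤ π/2) :
    |2*(r:ℝ)^3 / (∑ m ∈ Finset.Icc 1 r, Real.sin (m*x)^2) - 6/x^2|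
      ≤ 200000/((r:ℝ)*x^2) + 200000*(r:ℝ)^2 := by
  have hR1 : (1:ℝ) ≤ (r:ℝ) := Nat.one_le_cast.2 hr
  have hR0 : (0:ℝ) < (r:ℝ) := by linarith
  by_cases hA : (r:ℝ)*x ≤ 1/2
  · have h := caseA_arith (r:ℝ) _ x hR1 hx0 hA (sum_sin_sq_le r x)
      (sum_sin_sq_ge r x hx0.le (by linarith))
    refine h.trans ?_
    have h1 : 20/((r:ℝ)*x^2) ≤ 200000/((r:ℝ)*x^2) := by gcongr; norm_num
    nlinarith [sq_nonneg (r:ℝ)]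
  · push_neg at hA
    have hSc := caseB r hr x hx0 hx2 hA.le
    set S := ∑ m ∈ Finset.Icc 1 r, Real.sin (m*x)^2 with hS
    clear_value S
    have hSpos : 0 < S := lt_of_lt_of_le (by positivity) hSc
    have hx20 : 0 < x^2 := by positivity
    have h2 : 2*(r:ℝ)^3/S ≤ 160000*(r:ℝ)^2 := by
      rw [div_le_iff₀ hSpos]
      nlinarith [mul_le_mul_of_nonneg_left hSc (by positivity : (0:ℝ) ≤ 160000*(r:ℝ)^2)]
    have h6 : 6/x^2 ≤ 24*(r:ℝ)^2 := by
      rw [div_le_iff₀ hx20]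
      nlinarith [mul_le_mul hA.le hA.le (by norm_num) (by positivity)]
    have hpos1 : 0 ≤ 200000/((r:ℝ)*x^2) := by positivity
    have hpos2 : 0 ≤ 2*(r:ℝ)^3/S := by positivity
    have hpos3 : 0 ≤ 6/x^2 := by positivity
    rw [abs_le]
    constructor
    · nlinarith [sq_nonneg (r:ℝ)]
    · nlinarith [sq_nonneg (r:ℝ)]

/-- **Lemma (asymptotics of the eigenvalues).** -/
theorem eigenvalue_asymptotics
    (r : ℕ → ℕ) (hrn : ∀ n, 3 ≤ n → 0 < 2 * r n ∧ 2 * r n < n)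
    (hr : Tendsto r atTop atTop) :
    ∃ K : ℝ, 0 < K ∧ ∀ n : ℕ, 3 ≤ n → ∀ j : ℕ, 1 ≤ j → j ≤ n / 2 →
      |(2 * (r n : ℝ)) ^ 2 / ((n : ℝ) ^ 2 * beta n (r n) j) - 6 / (π ^ 2 * (j : ℝ) ^ 2)|
        ≤ K / ((r n : ℝ) * (j : ℝ) ^ 2) + K * (r n : ℝ) ^ 2 / (n : ℝ) ^ 2 := by
  refine ⟨200000, by norm_num, ?_⟩
  intro n hn j hj1 hj2
  obtain ⟨hr0, hr2n⟩ := hrn n hn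
  have hr1 : 1 ≤ r n := by omega
  have h2j : 2*j ≤ n := by
    have := (Nat.le_div_iff_mul_le (by norm_num : 0 < 2)).1 hj2
    omega
  have hN0 : (0:ℝ) < (n:ℝ) := by
    have : 0 < n := by omega
    exact_mod_cast this
  have hJ1 : (1:ℝ) ≤ (j:ℝ) := Nat.one_le_cast.2 hj1
  have hJ0 : (0:ℝ) < (j:ℝ) := by linarith
  have hR1 : (1:ℝ) ≤ (r n : ℝ) := Nat.one_le_cast.2 hr1
  have hR0 : (0:ℝ) < (r n : ℝ) := by linarith
  have hpi0 : (0:ℝ) < π := Real.pi_pos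
  have h2jR : 2*(j:ℝ) ≤ (n:ℝ) := by exact_mod_cast h2j
  have hNne : (n:ℝ) ≠ 0 := ne_of_gt hN0
  have hJne : (j:ℝ) ≠ 0 := ne_of_gt hJ0
  have hRne : (r n:ℝ) ≠ 0 := ne_of_gt hR0
  have hpine : π ≠ 0 := ne_of_gt hpi0
  set x := π*(j:ℝ)/(n:ℝ) with hx
  have hx0 : 0 < x := by rw [hx]; positivity
  have hx2 : x ≤ π/2 := by
    rw [hx, div_le_div_iff₀ hN0 (by norm_num : (0:ℝ) < 2)]
    nlinarith
  set S := ∑ m ∈ Finset.Icc 1 (r n), Real.sin (m*x)^2 with hSdef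
  have hSpos : 0 < S := by
    have h1 := S_single (r n) hr1 x
    have h2 : 0 < Real.sin x :=
      Real.sin_pos_of_pos_of_lt_pi hx0 (lt_of_le_of_lt hx2 (by linarith))
    rw [← hSdef] at h1
    nlinarith
  have hSne : S ≠ 0 := ne_of_gt hSpos
  have hsum_congr : ∑ m ∈ Finset.Icc 1 (r n), Real.cos (2*(j:ℝ)*(m:ℝ)*π/(n:ℝ))
      = ∑ m ∈ Finset.Icc 1 (r n), Real.cos (2*(m:ℝ)*x) := by
    refine Finset.sum_congr rfl (fun m _ => ?_)
    rw [hx]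
    congr 1
    field_simp
  have hC : ∑ m ∈ Finset.Icc 1 (r n), Real.cos (2*(m:ℝ)*x) = (r n : ℝ) - 2*S := by
    have h := sum_eq_half_sub (r n) x
    rw [← hSdef] at h
    linarith
  have hbeta : beta n (r n) j = 2*S/(r n:ℝ) := by
    rw [_root_.beta, alpha, hsum_congr, hC]
    field_simp
    ring
  rw [hbeta]
  have e : (2 * (r n:ℝ)) ^ 2 / ((n:ℝ) ^ 2 * (2*S/(r n:ℝ))) - 6 / (π ^ 2 * (j:ℝ) ^ 2)
      = (2*(r n:ℝ)^3/S - 6/x^2)/(n:ℝ)^2 := by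
    rw [hx]
    field_simp
  rw [e, abs_div, abs_of_pos (by positivity : (0:ℝ) < (n:ℝ)^2)]
  have hcore := core (r n) hr1 x hx0 hx2
  rw [← hSdef] at hcore
  calc |2*(r n:ℝ)^3/S - 6/x^2| / (n:ℝ)^2
      ≤ (200000/((r n:ℝ)*x^2) + 200000*(r n:ℝ)^2)/(n:ℝ)^2 := by gcongr
    _ = 200000/(π^2*((r n:ℝ)*(j:ℝ)^2)) + 200000*(r n:ℝ)^2/(n:ℝ)^2 := by
        rw [hx]
        field_simp
    _ ≤ 200000/((r n:ℝ)*(j:ℝ)^2) + 200000*(r n:ℝ)^2/(n:ℝ)^2 := by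
        have hpi1 : (1:ℝ) ≤ π^2 := by nlinarith [Real.pi_gt_three]
        have hd : (0:ℝ) < (r n:ℝ)*(j:ℝ)^2 := by positivity
        have : (r n:ℝ)*(j:ℝ)^2 ≤ π^2*((r n:ℝ)*(j:ℝ)^2) := by nlinarith
        gcongr

end
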